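/- Let p_{3,k}(x) = C(3,k)x^k(1−x)^{3−k}, k = 0,…,3, be the classical Bernstein basis of ℙ₃[0,1], and let f₁(x) = 3x/8 − x²/2 + x³/3. Then f₁′(x) = (x − 1/2)² + 1/8 > 0 for all x ∈ [0,1], and f₁′ = (3/8)p_{2,0} − (1/8)p_{2,1} + (3/8)p_{2,2} in the degree-2 classical Bernstein basis of ℙ₂[0,1]; nevertheless, there exist no non-decreasing nodes t_{3,0} ≤ t_{3,1} ≤ t_{3,2} ≤ t_{3,3} in [0,1] and strictly positive weights α_{3,0},…,α_{3,3} such that the operator B₃f = Σ_{k=0}^3 f(t_{3,k}) α_{3,k} p_{3,k} fixes both the constant function 1 and f₁. Hence strict positivity of (f₁/f₀)′ on [a,b] is not sufficient for the existence of a generalized Bernstein operator with non-decreasing nodes. -/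

import Mathlib

open Set

noncomputable section

/-- The classical Bernstein basis of `ℙ₃[0,1]`. -/
def pB3'' : Fin 4 → ℝ → ℝ :=
  fun k x => (Nat.choose 3 (k : ℕ)) * x ^ (k : ℕ) * (1 - x) ^ (3 - (k : ℕ))

/-- The classical Bernstein basis of `ℙ₂[0,1]`. -/
def pB2 : Fin 3 → ℝ → ℝ :=
  fun k x => (Nat.choose 2 (k : ℕ)) * x ^ (k : ℕ) * (1 - x) ^ (2 - (k : ℕ))

/-- The function `f₁(x) = 3x/8 - x²/2 + x³/3`. -/
def f₁B : ℝ → ℝ := fun x => 3 * x / 8 - x ^ 2 / 2 + x ^ 3 / 3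

lemma f1B_deriv (x : ℝ) : deriv f₁B x = (x - 1 / 2) ^ 2 + 1 / 8 := by
  have h : HasDerivAt f₁B ((x - 1/2)^2 + 1/8) x := by
    have h1 : HasDerivAt (fun x : ℝ => 3 * x / 8 - x ^ 2 / 2 + x ^ 3 / 3)
        (3 * 1 / 8 - (2 * x ^ 1) / 2 + (3 * x ^ 2) / 3) x := by
      exact (((hasDerivAt_id x).const_mul 3).div_const 8).sub
        ((hasDerivAt_pow 2 x).div_const 2) |>.add ((hasDerivAt_pow 3 x).div_const 3)
    convert h1 using 1
    · rfl
    ring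
  exact h.deriv

/-- For `f₁(x) = 3x/8 - x²/2 + x³/3` one has `f₁'(x) = (x - 1/2)² + 1/8 > 0` on `[0,1]`,
with Bernstein expansion `f₁' = (3/8)p₂₀ - (1/8)p₂₁ + (3/8)p₂₂`; nevertheless no generalized
Bernstein operator on `ℙ₃[0,1]` with non-decreasing nodes and strictly positive weights
fixes both `1` and `f₁`.  Hence strict positivity of `(f₁/f₀)'` on `[a,b]` does not suffice
for the existence of a generalized Bernstein operator with non-decreasing nodes. -/
theorem positivity_of_deriv_not_sufficient_for_monotone_nodes :
    (∀ x : ℝ, deriv f₁B x = (x - 1 / 2) ^ 2 + 1 / 8) ∧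
    (∀ x ∈ Set.Icc (0 : ℝ) 1, 0 < deriv f₁B x) ∧
    (∀ x : ℝ, deriv f₁B x = 3 / 8 * pB2 0 x - 1 / 8 * pB2 1 x + 3 / 8 * pB2 2 x) ∧
    ¬ ∃ t α : Fin 4 → ℝ, Monotone t ∧ (∀ k, t k ∈ Set.Icc (0 : ℝ) 1) ∧ (∀ k, 0 < α k) ∧
        (∀ x : ℝ, ∑ k, α k * pB3'' k x = 1) ∧
        (∀ x : ℝ, ∑ k, f₁B (t k) * α k * pB3'' k x = f₁B x) := by
  refine ⟨f1B_deriv, ?_, ?_, ?_⟩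
  · intro x _; rw [f1B_deriv]; positivity
  · intro x; rw [f1B_deriv]; simp [pB2]; ring
  · rintro ⟨t, α, hmono, hmem, hpos, h1, h2⟩
    have e0 := h1 0
    have e1 := h1 1
    have e13 := h1 (1/3)
    have e23 := h1 (2/3)
    norm_num [Fin.sum_univ_four, pB3'', (show ((0:Fin 4):ℕ)=0 from rfl), (show ((1:Fin 4):ℕ)=1 from rfl), (show ((2:Fin 4):ℕ)=2 from rfl), (show ((3:Fin 4):ℕ)=3 from rfl)] at e0 e1 e13 e23
    have hα0 : α 0 = 1 := by linarith
    have hα3 : α 3 = 1 := by linarith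
    have hα1 : α 1 = 1 := by linarith
    have hα2 : α 2 = 1 := by linarith
    have d0 := h2 0
    have d1 := h2 1
    have d13 := h2 (1/3)
    have d23 := h2 (2/3)
    norm_num [Fin.sum_univ_four, pB3'', f₁B, hα0, hα1, hα2, hα3, (show ((0:Fin 4):ℕ)=0 from rfl), (show ((1:Fin 4):ℕ)=1 from rfl), (show ((2:Fin 4):ℕ)=2 from rfl), (show ((3:Fin 4):ℕ)=3 from rfl)] at d0 d1 d13 d23
    have ht1 : f₁B (t 1) = 1/8 := by unfold f₁B; linarith
    have ht2 : f₁B (t 2) = 1/12 := by unfold f₁B; linarith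
    have hm : StrictMono f₁B := by
      apply strictMono_of_deriv_pos
      intro x; rw [f1B_deriv]; positivity
    have h12 : f₁B (t 1) ≤ f₁B (t 2) := hm.monotone (hmono (by decide : (1 : Fin 4) ≤ 2))
    rw [ht1, ht2] at h12
    norm_num at h12

end
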